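/- A topology O on X is weakly reversible (i.e., every topology O' on X with O' ∼ O is homeomorphic to O) if and only if the homeomorphism class [O]_≅ is a convex subset of the inclusion lattice of topologies on X. -/

import Mathlib

open Set Filter TopologicalSpace

variable {X : Type*}

/-- The family of open sets of a topology. -/
def opensOf (O : TopologicalSpace X) : Set (Set X) := {U | O.IsOpen U}

/-- The image family f[O] = { f[U] : U ∈ O } of a topology under a bijection. -/
def imgOpens (f : X ≃ X) (O : TopologicalSpace X) : Set (Set X) :=
  (Set.image f) '' opensOf O

/-- A topology is reversible iff every continuous self-bijection is a homeomorphism. -/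
def Reversible (O : TopologicalSpace X) : Prop :=
  ∀ f : X ≃ X, @Continuous X X O O f → @Continuous X X O O f.symm

/-- The homeomorphism class [O]_≅ of a topology within the topologies on X. -/
def homeoCls (O : TopologicalSpace X) : Set (TopologicalSpace X) :=
  {O' | ∃ f : X ≃ X, imgOpens f O = opensOf O'}

/-- O₁ ≼ O₂ : there is a condensation (continuous bijection) (X,O₂) → (X,O₁). -/
def Cond (O₁ O₂ : TopologicalSpace X) : Prop :=
  ∃ f : X ≃ X, @Continuous X X O₂ O₁ f

/-- The condensational equivalence class [O]_∼. -/
def simCls (O : TopologicalSpace X) : Set (TopologicalSpace X) :=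
  {O' | Cond O' O ∧ Cond O O'}

lemma opens_coinduced (f : X ≃ X) (O : TopologicalSpace X) :
    imgOpens f O = opensOf (O.coinduced f) := by
  ext V
  constructor
  · rintro ⟨U, hU, rfl⟩
    show O.IsOpen ((f : X → X) ⁻¹' ((f : X → X) '' U))
    rwa [Equiv.preimage_image]
  · intro hV
    exact ⟨(f : X → X) ⁻¹' V, hV, f.image_preimage V⟩

/-- O is weakly reversible iff [O]_≅ is convex. -/
theorem stmt_5 (O : TopologicalSpace X) :
    (∀ O' ∈ simCls O, O' ∈ homeoCls O) ↔
      (∀ O₁ ∈ homeoCls O, ∀ O₂ ∈ homeoCls O, ∀ O' : TopologicalSpace X,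
        opensOf O₁ ⊆ opensOf O' → opensOf O' ⊆ opensOf O₂ → O' ∈ homeoCls O) := by
  constructor
  · rintro h O₁ ⟨f, hf⟩ O₂ ⟨g, hg⟩ O' h1 h2
    apply h
    constructor
    · refine ⟨g, ?_⟩
      rw [continuous_def]
      intro V hV
      have hV2 : V ∈ opensOf O₂ := h2 hV
      rw [← hg] at hV2
      obtain ⟨U, hU, rfl⟩ := hV2
      rwa [Equiv.preimage_image]
    · refine ⟨f.symm, ?_⟩
      rw [continuous_def]
      intro U hU
      have h3 : f '' U ∈ opensOf O₁ := by rw [← hf]; exact ⟨U, hU, rfl⟩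
      have h4 : f '' U ∈ opensOf O' := h1 h3
      rwa [Equiv.image_eq_preimage_symm] at h4
  · rintro h O' ⟨⟨f, hf⟩, ⟨g, hg⟩⟩
    refine h (O.coinduced g.symm) ⟨g.symm, opens_coinduced _ _⟩
      (O.coinduced f) ⟨f, opens_coinduced _ _⟩ O' ?_ ?_
    · intro V hV
      have hV' : O.IsOpen ((g.symm : X → X) ⁻¹' V) := hV
      have := (continuous_def.mp hg) _ hV'
      show @IsOpen X O' V
      simpa [Set.preimage_preimage] using this
    · intro V hV
      exact (continuous_def.mp hf) _ hV
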